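/- Fix a nonempty finite action set A. For every finite state set Ω, the share of environments (u_S, u_R) that are jointly-inclusive is at least 1 − |A| (1 − 1/|A|²)^{|Ω|}; consequently, as |Ω| → ∞ this share converges to 1. -/

import Mathlib

open MeasureTheory

namespace KL

/-- `f` is a probability distribution on the finite type `X`. -/
def IsDist {X : Type} [Fintype X] (f : X → ℝ) : Prop :=
  (∀ x, 0 ≤ f x) ∧ ∑ x, f x = 1

/-- `μ₀` is an interior prior on `Ω`. -/
def IsPrior {Ω : Type} [Fintype Ω] (μ₀ : Ω → ℝ) : Prop :=
  (∀ ω, 0 < μ₀ ω) ∧ ∑ ω, μ₀ ω = 1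

variable {Ω A M : Type} [Fintype Ω] [Fintype A] [Fintype M]

/-- A messaging strategy: a distribution over messages in each state. -/
def IsMsg (σ : Ω → M → ℝ) : Prop := ∀ ω, IsDist (σ ω)

/-- An action strategy: a distribution over actions after each message. -/
def IsAct (ρ : M → A → ℝ) : Prop := ∀ m, IsDist (ρ m)

/-- Expected payoff of a profile `(σ, ρ)` for utility `u`. -/
def U (μ₀ : Ω → ℝ) (u : A × Ω → ℝ) (σ : Ω → M → ℝ) (ρ : M → A → ℝ) : ℝ :=
  ∑ ω, ∑ m, ∑ a, μ₀ ω * σ ω m * ρ m a * u (a, ω)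

/-- Sender best response. -/
def SBR (μ₀ : Ω → ℝ) (uS : A × Ω → ℝ) (σ : Ω → M → ℝ) (ρ : M → A → ℝ) : Prop :=
  ∀ σ' : Ω → M → ℝ, IsMsg σ' → U μ₀ uS σ' ρ ≤ U μ₀ uS σ ρ

/-- Receiver best response. -/
def RBR (μ₀ : Ω → ℝ) (uR : A × Ω → ℝ) (σ : Ω → M → ℝ) (ρ : M → A → ℝ) : Prop :=
  ∀ ρ' : M → A → ℝ, IsAct ρ' → U μ₀ uR σ ρ' ≤ U μ₀ uR σ ρ

/-- A cheap-talk equilibrium: a profile of valid strategies that is S-BR and R-BR. -/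
def CTEq (μ₀ : Ω → ℝ) (uS uR : A × Ω → ℝ) (σ : Ω → M → ℝ) (ρ : M → A → ℝ) : Prop :=
  IsMsg σ ∧ IsAct ρ ∧ SBR μ₀ uS σ ρ ∧ RBR μ₀ uR σ ρ

/-- A persuasion profile: a profile of valid strategies that is R-BR. -/
def PersProfile (μ₀ : Ω → ℝ) (uR : A × Ω → ℝ) (σ : Ω → M → ℝ) (ρ : M → A → ℝ) : Prop :=
  IsMsg σ ∧ IsAct ρ ∧ RBR μ₀ uR σ ρ

/-- The cheap-talk payoff: the maximal Sender payoff over cheap-talk equilibria. -/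
noncomputable def ctPayoff (μ₀ : Ω → ℝ) (uS uR : A × Ω → ℝ) : ℝ :=
  sSup {x | ∃ (σ : Ω → M → ℝ) (ρ : M → A → ℝ), CTEq μ₀ uS uR σ ρ ∧ x = U μ₀ uS σ ρ}

/-- The (Bayesian) persuasion payoff: the maximal Sender payoff over persuasion profiles. -/
noncomputable def persPayoff (μ₀ : Ω → ℝ) (uS uR : A × Ω → ℝ) : ℝ :=
  sSup {x | ∃ (σ : Ω → M → ℝ) (ρ : M → A → ℝ), PersProfile μ₀ uR σ ρ ∧ x = U μ₀ uS σ ρ}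

/-- A messaging strategy is partitional if it is deterministic in every state. -/
def Partitional (σ : Ω → M → ℝ) : Prop := ∀ ω, ∃ m, σ ω m = 1

/-- The partitional persuasion payoff. -/
noncomputable def partPersPayoff (μ₀ : Ω → ℝ) (uS uR : A × Ω → ℝ) : ℝ :=
  sSup {x | ∃ (σ : Ω → M → ℝ) (ρ : M → A → ℝ),
    Partitional σ ∧ PersProfile μ₀ uR σ ρ ∧ x = U μ₀ uS σ ρ}

/-- The partitional cheap-talk payoff. -/
noncomputable def partCtPayoff (μ₀ : Ω → ℝ) (uS uR : A × Ω → ℝ) : ℝ :=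
  sSup {x | ∃ (σ : Ω → M → ℝ) (ρ : M → A → ℝ),
    Partitional σ ∧ CTEq μ₀ uS uR σ ρ ∧ x = U μ₀ uS σ ρ}

/-- A message is on-path if it is sent with positive probability in some state. -/
def OnPath (σ : Ω → M → ℝ) (m : M) : Prop := ∃ ω, 0 < σ ω m

/-- A pure action strategy: degenerate after every message. -/
def IsPureAct (ρ : M → A → ℝ) : Prop := ∀ m, ∃ a, ρ m a = 1

/-- A pure-on-path action strategy: degenerate after every on-path message. -/
def PureOnPath (σ : Ω → M → ℝ) (ρ : M → A → ℝ) : Prop :=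
  ∀ m, OnPath σ m → ∃ a, ρ m a = 1

/-- The posterior belief induced by message `m`. -/
noncomputable def post (μ₀ : Ω → ℝ) (σ : Ω → M → ℝ) (m : M) (ω : Ω) : ℝ :=
  μ₀ ω * σ ω m / ∑ ω', μ₀ ω' * σ ω' m

/-- The cube of environments `[0,1]^(2|A||Ω|)`. -/
def EnvCube (Ω A : Type) : Set ((A × Ω → ℝ) × (A × Ω → ℝ)) :=
  {e | (∀ p, e.1 p ∈ Set.Icc (0 : ℝ) 1) ∧ ∀ p, e.2 p ∈ Set.Icc (0 : ℝ) 1}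

/-- The cube of transparent environments `[0,1]^(|A|(|Ω|+1))`, points `(v, u_R)`. -/
def TransCube (Ω A : Type) : Set ((A → ℝ) × (A × Ω → ℝ)) :=
  {e | (∀ a, e.1 a ∈ Set.Icc (0 : ℝ) 1) ∧ ∀ p, e.2 p ∈ Set.Icc (0 : ℝ) 1}

open Classical in
/-- The expanded-indifference matrix `T^i`: rows `u_S(a_j,·) − u_S(a_i,·)` for `j ≠ i`,
rows `u_R(a_j,·) − u_R(a_i,·)` for `j ≠ i`, and the rows of the identity matrix. -/
noncomputable def TMat (uS uR : A × Ω → ℝ) (i : A) :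
    Matrix (({j : A // j ≠ i} ⊕ {j : A // j ≠ i}) ⊕ Ω) Ω ℝ :=
  Matrix.of fun r ω =>
    match r with
    | Sum.inl (Sum.inl j) => uS (j.1, ω) - uS (i, ω)
    | Sum.inl (Sum.inr j) => uR (j.1, ω) - uR (i, ω)
    | Sum.inr ω' => if ω' = ω then 1 else 0

/-- Scant indifferences: every row-submatrix of every expanded-indifference matrix has
full rank (rank equal to the minimum of the number of rows and the number of columns). -/
def ScantIndiff (uS uR : A × Ω → ℝ) : Prop :=
  ∀ i : A, ∀ s : Finset (({j : A // j ≠ i} ⊕ {j : A // j ≠ i}) ⊕ Ω),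
    ((TMat uS uR i).submatrix (fun r : {x // x ∈ s} => r.1) id).rank
      = min s.card (Fintype.card Ω)

open Classical in
/-- The set `Ω_a` of states in which `a` is an ideal action for Sender. -/
noncomputable def idealStates (uS : A × Ω → ℝ) (a : A) : Finset Ω :=
  Finset.univ.filter fun ω => ∀ b, uS (b, ω) ≤ uS (a, ω)

/-- Felicitous environment. -/
def Felicitous (μ₀ : Ω → ℝ) (uS uR : A × Ω → ℝ) : Prop :=
  ∀ a a' : A, 0 ≤ ∑ ω ∈ idealStates uS a, μ₀ ω * (uR (a, ω) - uR (a', ω))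

/-- Partitional-unique-response: for every nonempty subset of states, Receiver's
expected payoff has a unique maximizer. -/
def PUR (μ₀ : Ω → ℝ) (uR : A × Ω → ℝ) : Prop :=
  ∀ S : Finset Ω, S.Nonempty →
    ∃! a : A, ∀ b : A, ∑ ω ∈ S, μ₀ ω * uR (b, ω) ≤ ∑ ω ∈ S, μ₀ ω * uR (a, ω)

/-- Jointly-inclusive environment: each action is the unique ideal action of both
players in some state. -/
def JointlyInclusive (uS uR : A × Ω → ℝ) : Prop :=
  ∀ a : A, ∃ ω : Ω,
    (∀ b, b ≠ a → uS (b, ω) < uS (a, ω)) ∧ ∀ b, b ≠ a → uR (b, ω) < uR (a, ω)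


section ShareProof

open Set
open scoped ENNReal

def kube (ι : Type) : Set (ι → ℝ) := {f | ∀ x, f x ∈ Set.Icc (0:ℝ) 1}

section Helpers

variable {ι : Type} [Fintype ι]


variable {ι : Type} [Fintype ι]

lemma kube_eq_pi : kube ι = Set.pi Set.univ (fun _ => Set.Icc (0:ℝ) 1) := by
  ext f; simp [kube, Set.mem_pi, Pi.le_def, forall_and]

lemma measurableSet_kube : MeasurableSet (kube ι) := by
  rw [kube_eq_pi]
  exact MeasurableSet.pi (Set.to_countable _) fun _ _ => measurableSet_Icc

lemma vol_kube : volume (kube ι) = 1 := by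
  rw [kube_eq_pi, volume_pi, Measure.pi_pi]
  simp [Real.volume_Icc]

def Dset (a : ι) : Set (ι → ℝ) := kube ι ∩ {f | ∀ b, b ≠ a → f b < f a}

lemma measurableSet_Dset (a : ι) : MeasurableSet (Dset a) := by
  refine measurableSet_kube.inter ?_
  have : {f : ι → ℝ | ∀ b, b ≠ a → f b < f a}
      = ⋂ b, ⋂ (_ : b ≠ a), {f : ι → ℝ | f b < f a} := by
    ext f; simp
  rw [this]
  exact MeasurableSet.iInter fun b => MeasurableSet.iInter fun _ =>
    measurableSet_lt (measurable_pi_apply b) (measurable_pi_apply a)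

lemma vol_ties {a b : ι} (hab : a ≠ b) : volume {f : ι → ℝ | f a = f b} = 0 := by
  classical
  have hmp := volume_preserving_piEquivPiSubtypeProd (fun _ : ι => ℝ) (· = a)
  set s : Set (({x : ι // x = a} → ℝ) × ({x : ι // ¬ x = a} → ℝ)) :=
    {p | p.2 ⟨b, fun h => hab h.symm⟩ = p.1 ⟨a, rfl⟩} with hs_def
  have m2 : Measurable (fun p : (({x : ι // x = a} → ℝ) × ({x : ι // ¬ x = a} → ℝ)) =>
      p.2 ⟨b, fun h => hab h.symm⟩) := (measurable_pi_apply _).comp measurable_snd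
  have m1 : Measurable (fun p : (({x : ι // x = a} → ℝ) × ({x : ι // ¬ x = a} → ℝ)) =>
      p.1 ⟨a, rfl⟩) := (measurable_pi_apply _).comp measurable_fst
  have hs : MeasurableSet s := measurableSet_eq_fun m2 m1
  have hpre : (MeasurableEquiv.piEquivPiSubtypeProd (fun _ : ι => ℝ) (· = a)) ⁻¹' s
      = {f : ι → ℝ | f a = f b} := by
    ext f; exact eq_comm
  rw [← hpre, hmp.measure_preimage hs.nullMeasurableSet, Measure.volume_eq_prod,
    Measure.prod_apply hs]
  have h0 : ∀ g : {x : ι // x = a} → ℝ, volume (Prod.mk g ⁻¹' s) = 0 := by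
    intro g
    have : Prod.mk g ⁻¹' s
        = {h : {x : ι // ¬ x = a} → ℝ | h ⟨b, fun h => hab h.symm⟩ = g ⟨a, rfl⟩} := rfl
    rw [this, volume_pi]
    exact Measure.pi_hyperplane _ _ _
  simp [h0]

lemma vol_Dset_eq (a b : ι) : volume (Dset a) = volume (Dset b) := by
  classical
  set σ := Equiv.swap a b with hσdef
  have hmp : MeasurePreserving (MeasurableEquiv.piCongrLeft (fun _ : ι => ℝ) σ) volume volume :=
    volume_measurePreserving_piCongrLeft _ _
  have hap : ∀ (g : ι → ℝ) (x : ι),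
      (MeasurableEquiv.piCongrLeft (fun _ : ι => ℝ) σ) g x = g (σ x) := by
    intro g x
    conv_lhs => rw [show x = σ (σ x) by simp [hσdef]]
    exact MeasurableEquiv.piCongrLeft_apply_apply (β := fun _ => ℝ) σ g (σ x)
  have hσa : σ a = b := Equiv.swap_apply_left a b
  have hσb : σ b = a := Equiv.swap_apply_right a b
  have hσσ : ∀ x, σ (σ x) = x := fun x => by simp [hσdef]
  have hpre : (MeasurableEquiv.piCongrLeft (fun _ : ι => ℝ) σ) ⁻¹' (Dset b) = Dset a := by
    ext g
    simp only [Dset, kube, Set.mem_preimage, Set.mem_inter_iff, Set.mem_setOf_eq, hap]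
    constructor
    · rintro ⟨h1, h2⟩
      refine ⟨fun x => by simpa [hσσ] using h1 (σ x), fun d hd => ?_⟩
      have hne : σ d ≠ b := fun h => hd (by rw [← hσσ d, h, hσb])
      have := h2 (σ d) hne
      rwa [hσσ, hσb] at this
    · rintro ⟨h1, h2⟩
      refine ⟨fun x => h1 _, fun c hc => ?_⟩
      have hne : σ c ≠ a := fun h => hc (by rw [← hσσ c, h, hσa])
      have := h2 (σ c) hne
      rwa [← hσb] at this
  rw [← hpre, hmp.measure_preimage (measurableSet_Dset b).nullMeasurableSet]

lemma vol_Dset_ge [Nonempty ι] (a : ι) :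
    ((Fintype.card ι : ℝ≥0∞))⁻¹ ≤ volume (Dset a) := by
  classical
  have hties : volume (⋃ p : ι × ι, ⋃ (_ : p.1 ≠ p.2), {f : ι → ℝ | f p.1 = f p.2}) = 0 := by
    refine measure_iUnion_null fun p => ?_
    by_cases hp : p.1 ≠ p.2
    · exact measure_mono_null (Set.iUnion_subset fun _ => subset_rfl) (vol_ties hp)
    · have : (⋃ (_ : p.1 ≠ p.2), {f : ι → ℝ | f p.1 = f p.2}) = ∅ := by
        rw [Set.iUnion_eq_empty]; intro h; exact absurd h hp
      rw [this, measure_empty]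
  have hcover : kube ι ⊆ (⋃ x, Dset x)
      ∪ (⋃ p : ι × ι, ⋃ (_ : p.1 ≠ p.2), {f : ι → ℝ | f p.1 = f p.2}) := by
    intro f hf
    obtain ⟨x, hx⟩ := Finite.exists_max f
    by_cases hstrict : ∀ b, b ≠ x → f b < f x
    · exact Or.inl (Set.mem_iUnion.2 ⟨x, hf, hstrict⟩)
    · push_neg at hstrict
      obtain ⟨b, hbx, hbge⟩ := hstrict
      have hfb : f x = f b := le_antisymm hbge (hx b)
      exact Or.inr (Set.mem_iUnion.2 ⟨(x, b),
        Set.mem_iUnion.2 ⟨fun h => hbx h.symm, hfb⟩⟩)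
  have hdisj : Pairwise (Function.onFun Disjoint fun x : ι => Dset x) := by
    intro x y hxy
    rw [Function.onFun, Set.disjoint_left]
    rintro f ⟨_, h2⟩ ⟨_, h4⟩
    exact lt_asymm (h2 y (Ne.symm hxy)) (h4 x hxy)
  have hunion : volume (⋃ x : ι, Dset x) = ∑ x : ι, volume (Dset x) := by
    have hmeas : ∀ x : ι, MeasurableSet (Dset x) := fun x => measurableSet_Dset x
    rw [measure_iUnion hdisj hmeas, tsum_fintype]
  have hsum : ∑ x : ι, volume (Dset x) = (Fintype.card ι : ℝ≥0∞) * volume (Dset a) := by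
    rw [Finset.sum_congr rfl fun x _ => vol_Dset_eq x a, Finset.sum_const, Finset.card_univ,
      nsmul_eq_mul]
  have hone : (1:ℝ≥0∞) ≤ (Fintype.card ι : ℝ≥0∞) * volume (Dset a) := by
    have h1 : volume (kube ι) ≤ volume ((⋃ x : ι, Dset x)
        ∪ (⋃ p : ι × ι, ⋃ (_ : p.1 ≠ p.2), {f : ι → ℝ | f p.1 = f p.2})) :=
      measure_mono hcover
    rw [vol_kube] at h1
    have h2 := h1.trans (measure_union_le _ _)
    rw [hunion, hties, add_zero, hsum] at h2
    exact h2
  have hn0 : ((Fintype.card ι : ℕ) : ℝ≥0∞) ≠ 0 := by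
    exact_mod_cast Fintype.card_ne_zero
  have hnt : ((Fintype.card ι : ℕ) : ℝ≥0∞) ≠ ⊤ := ENNReal.natCast_ne_top _
  calc ((Fintype.card ι : ℝ≥0∞))⁻¹ = ((Fintype.card ι : ℝ≥0∞))⁻¹ * 1 := (mul_one _).symm
    _ ≤ ((Fintype.card ι : ℝ≥0∞))⁻¹ * ((Fintype.card ι : ℝ≥0∞) * volume (Dset a)) :=
        mul_le_mul_right hone _
    _ = volume (Dset a) := by rw [← mul_assoc, ENNReal.inv_mul_cancel hn0 hnt, one_mul]

lemma vol_slices_fin {κ : Type} [Fintype κ] : ∀ (n : ℕ) (S : Fin n → Set (κ → ℝ)),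
    (∀ i, MeasurableSet (S i)) →
    volume {f : κ × Fin n → ℝ | ∀ i, (fun k => f (k, i)) ∈ S i} = ∏ i, volume (S i) := by
  intro n
  induction n with
  | zero =>
    intro S _
    have h : {f : κ × Fin 0 → ℝ | ∀ i, (fun k => f (k, i)) ∈ S i} = Set.univ := by
      ext f; simp
    rw [h, volume_pi, Measure.pi_univ]
    simp
  | succ n ih =>
    intro S hS
    classical
    set e : κ × Fin (n+1) ≃ (κ × Fin n) ⊕ κ :=
      ((Equiv.refl κ).prodCongr (finSumFinEquiv (m := n) (n := 1)).symm).trans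
        ((Equiv.prodSumDistrib κ (Fin n) (Fin 1)).trans
          ((Equiv.refl (κ × Fin n)).sumCongr (Equiv.prodUnique κ (Fin 1)))) with he
    have he1 : ∀ (k : κ) (j : Fin n), e (k, j.castSucc) = Sum.inl (k, j) := by
      intro k j
      have h1 : (finSumFinEquiv (m := n) (n := 1)).symm j.castSucc = Sum.inl j := by
        rw [Equiv.symm_apply_eq, finSumFinEquiv_apply_left]
        rfl
      simp [he, h1]
    have he2 : ∀ k : κ, e (k, Fin.last n) = Sum.inr k := by
      intro k
      have h1 : (finSumFinEquiv (m := n) (n := 1)).symm (Fin.last n) = Sum.inr 0 := by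
        rw [Equiv.symm_apply_eq, finSumFinEquiv_apply_right]
        ext
        simp
      simp [he, h1]
    set Ψ := MeasurableEquiv.piCongrLeft (fun _ : (κ × Fin n) ⊕ κ => ℝ) e with hΨ
    set ξ := MeasurableEquiv.sumPiEquivProdPi (fun _ : (κ × Fin n) ⊕ κ => ℝ) with hξ
    have hmp : MeasurePreserving (Ψ.trans ξ) volume volume :=
      (volume_measurePreserving_sumPiEquivProdPi _).comp
        (volume_measurePreserving_piCongrLeft _ _)
    have ev1 : ∀ (f : κ × Fin (n+1) → ℝ) (k : κ) (j : Fin n),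
        ((Ψ.trans ξ) f).1 (k, j) = f (k, j.castSucc) := by
      intro f k j
      have h := MeasurableEquiv.piCongrLeft_apply_apply
        (β := fun _ : (κ × Fin n) ⊕ κ => ℝ) e f (k, j.castSucc)
      rw [he1] at h
      exact h
    have ev2 : ∀ (f : κ × Fin (n+1) → ℝ) (k : κ),
        ((Ψ.trans ξ) f).2 k = f (k, Fin.last n) := by
      intro f k
      have h := MeasurableEquiv.piCongrLeft_apply_apply
        (β := fun _ : (κ × Fin n) ⊕ κ => ℝ) e f (k, Fin.last n)
      rw [he2] at h
      exact h
    set U : Set (κ × Fin n → ℝ) := {g | ∀ j, (fun k => g (k, j)) ∈ S j.castSucc} with hU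
    have hUm : MeasurableSet U := by
      have h : U = ⋂ j, (fun (g : κ × Fin n → ℝ) (k : κ) => g (k, j)) ⁻¹' S j.castSucc := by
        ext g; simp [hU]
      rw [h]
      exact MeasurableSet.iInter fun j =>
        (measurable_pi_lambda _ fun k => measurable_pi_apply _) (hS _)
    have hpre : (Ψ.trans ξ) ⁻¹' (U ×ˢ S (Fin.last n))
        = {f : κ × Fin (n+1) → ℝ | ∀ i, (fun k => f (k, i)) ∈ S i} := by
      ext f
      simp only [Set.mem_preimage, Set.mem_prod, Set.mem_setOf_eq, hU]
      rw [Fin.forall_fin_succ' (P := fun i => (fun k => f (k, i)) ∈ S i)]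
      constructor
      · rintro ⟨h1, h2⟩
        refine ⟨fun j => ?_, ?_⟩
        · have h3 := h1 j
          rwa [show (fun k => ((Ψ.trans ξ) f).1 (k, j)) = fun k => f (k, j.castSucc) from
            funext fun k => ev1 f k j] at h3
        · rwa [show ((Ψ.trans ξ) f).2 = fun k => f (k, Fin.last n) from
            funext fun k => ev2 f k] at h2
      · rintro ⟨h1, h2⟩
        refine ⟨fun j => ?_, ?_⟩
        · have h3 := h1 j
          rwa [show (fun k => ((Ψ.trans ξ) f).1 (k, j)) = fun k => f (k, j.castSucc) from
            funext fun k => ev1 f k j]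
        · rwa [show ((Ψ.trans ξ) f).2 = fun k => f (k, Fin.last n) from
            funext fun k => ev2 f k]
    rw [← hpre, hmp.measure_preimage (hUm.prod (hS _)).nullMeasurableSet,
      Measure.volume_eq_prod, Measure.prod_prod, Fin.prod_univ_castSucc]
    congr 1
    exact ih _ fun j => hS _

lemma vol_slices {κ W : Type} [Fintype κ] [Fintype W] (S : Set (κ → ℝ)) (hS : MeasurableSet S) :
    volume {f : κ × W → ℝ | ∀ ω, (fun k => f (k, ω)) ∈ S} = volume S ^ Fintype.card W := by
  classical
  set E := Fintype.equivFin W with hE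
  set q : κ × Fin (Fintype.card W) ≃ κ × W := (Equiv.refl κ).prodCongr E.symm with hq
  have hmp : MeasurePreserving (MeasurableEquiv.piCongrLeft (fun _ : κ × W => ℝ) q)
      volume volume := volume_measurePreserving_piCongrLeft _ _
  have hsetm : MeasurableSet {f : κ × W → ℝ | ∀ ω, (fun k => f (k, ω)) ∈ S} := by
    have h : {f : κ × W → ℝ | ∀ ω, (fun k => f (k, ω)) ∈ S}
        = ⋂ ω, (fun (f : κ × W → ℝ) (k : κ) => f (k, ω)) ⁻¹' S := by ext; simp
    rw [h]
    exact MeasurableSet.iInter fun ω =>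
      (measurable_pi_lambda _ fun k => measurable_pi_apply _) hS
  have hap : ∀ (g : κ × Fin (Fintype.card W) → ℝ) (k : κ) (i : Fin (Fintype.card W)),
      (MeasurableEquiv.piCongrLeft (fun _ : κ × W => ℝ) q) g (k, E.symm i) = g (k, i) := by
    intro g k i
    have h := MeasurableEquiv.piCongrLeft_apply_apply (β := fun _ : κ × W => ℝ) q g (k, i)
    simpa [hq] using h
  have hpre : (MeasurableEquiv.piCongrLeft (fun _ : κ × W => ℝ) q) ⁻¹'
      {f : κ × W → ℝ | ∀ ω, (fun k => f (k, ω)) ∈ S}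
      = {g : κ × Fin (Fintype.card W) → ℝ | ∀ i, (fun k => g (k, i)) ∈ S} := by
    ext g
    simp only [Set.mem_preimage, Set.mem_setOf_eq]
    constructor
    · intro h i
      have h2 := h (E.symm i)
      rwa [show (fun k => (MeasurableEquiv.piCongrLeft (fun _ : κ × W => ℝ) q) g (k, E.symm i))
          = fun k => g (k, i) from funext fun k => hap g k i] at h2
    · intro h ω
      have h2 := h (E ω)
      rwa [show (fun k => (MeasurableEquiv.piCongrLeft (fun _ : κ × W => ℝ) q) g (k, ω))
          = fun k => g (k, E ω) from funext fun k => by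
        conv_lhs => rw [show ω = E.symm (E ω) by simp]
        rw [hap]]
  calc volume {f : κ × W → ℝ | ∀ ω, (fun k => f (k, ω)) ∈ S}
      = volume {g : κ × Fin (Fintype.card W) → ℝ | ∀ i, (fun k => g (k, i)) ∈ S} := by
        rw [← hpre, hmp.measure_preimage hsetm.nullMeasurableSet]
    _ = ∏ _i : Fin (Fintype.card W), volume S := vol_slices_fin _ _ (fun _ => hS)
    _ = volume S ^ Fintype.card W := by simp


end Helpers


lemma env_decomp (Ω A : Type) : EnvCube Ω A = (kube (A × Ω)) ×ˢ (kube (A × Ω)) := rfl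

lemma vol_env (Ω A : Type) [Fintype Ω] [Fintype A] : volume (EnvCube Ω A) = 1 := by
  rw [env_decomp, Measure.volume_eq_prod, Measure.prod_prod, vol_kube, one_mul]

lemma main_bound (A : Type) [Fintype A] [Nonempty A] (Ω : Type) [Fintype Ω] [Nonempty Ω] :
    1 - (Fintype.card A : ℝ) *
        (1 - 1 / (Fintype.card A : ℝ) ^ 2) ^ Fintype.card Ω ≤
      (volume (EnvCube Ω A ∩ {e | JointlyInclusive e.1 e.2})).toReal := by
  classical
  set n := Fintype.card A with hn
  set k := Fintype.card Ω with hk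
  set ρ : ℝ := 1 - 1 / (n : ℝ) ^ 2 with hρ
  have hn1 : (1:ℕ) ≤ n := Fintype.card_pos
  have hn1R : (1:ℝ) ≤ (n:ℝ) := by exact_mod_cast hn1
  have hρ0 : 0 ≤ ρ := by
    rw [hρ]
    have h2 : (1:ℝ) ≤ (n:ℝ)^2 := by nlinarith
    have h3 : 1 / (n:ℝ)^2 ≤ 1 := by rw [div_le_one (by nlinarith)]; exact h2
    linarith
  -- per-state good set
  set G : A → Set (A ⊕ A → ℝ) := fun a =>
    {f | (fun x => f (Sum.inl x)) ∈ Dset a ∧ (fun x => f (Sum.inr x)) ∈ Dset a} with hG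
  have hGm : ∀ a, MeasurableSet (G a) := by
    intro a
    have h : G a = ((fun (f : A ⊕ A → ℝ) (x : A) => f (Sum.inl x)) ⁻¹' Dset a)
        ∩ ((fun (f : A ⊕ A → ℝ) (x : A) => f (Sum.inr x)) ⁻¹' Dset a) := rfl
    rw [h]
    exact ((measurable_pi_lambda _ fun x => measurable_pi_apply _) (measurableSet_Dset a)).inter
      ((measurable_pi_lambda _ fun x => measurable_pi_apply _) (measurableSet_Dset a))
  have hGsub : ∀ a, G a ⊆ kube (A ⊕ A) := by
    rintro a f ⟨⟨h1, _⟩, ⟨h2, _⟩⟩ x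
    cases x with
    | inl b => exact h1 b
    | inr b => exact h2 b
  have hGvol : ∀ a, ((n : ℝ≥0∞))⁻¹ * ((n : ℝ≥0∞))⁻¹ ≤ volume (G a) := by
    intro a
    have hmp := volume_measurePreserving_sumPiEquivProdPi (fun _ : A ⊕ A => ℝ)
    have hpre : (MeasurableEquiv.sumPiEquivProdPi (fun _ : A ⊕ A => ℝ)) ⁻¹'
        (Dset a ×ˢ Dset a) = G a := rfl
    rw [← hpre, hmp.measure_preimage
        (((measurableSet_Dset a).prod (measurableSet_Dset a)).nullMeasurableSet),
      Measure.volume_eq_prod, Measure.prod_prod]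
    exact mul_le_mul' (vol_Dset_ge a) (vol_Dset_ge a)
  have hfail : ∀ a : A, volume (kube (A ⊕ A) \ G a) ≤ ENNReal.ofReal ρ := by
    intro a
    have hGfin : volume (G a) ≠ ⊤ :=
      (lt_of_le_of_lt (measure_mono (hGsub a)) (by rw [vol_kube]; exact ENNReal.one_lt_top)).ne
    have hdiff : volume (kube (A ⊕ A) \ G a) = volume (kube (A ⊕ A)) - volume (G a) :=
      measure_diff (hGsub a) (hGm a).nullMeasurableSet hGfin
    rw [hdiff, vol_kube]
    have h1 : (1:ℝ≥0∞) - volume (G a) ≤ 1 - ((n : ℝ≥0∞))⁻¹ * ((n : ℝ≥0∞))⁻¹ :=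
      tsub_le_tsub_left (hGvol a) 1
    refine h1.trans (le_of_eq ?_)
    have hnn : ((n : ℕ) : ℝ≥0∞)⁻¹ = ENNReal.ofReal ((n:ℝ))⁻¹ := by
      rw [ENNReal.ofReal_inv_of_pos (by linarith), ENNReal.ofReal_natCast]
    rw [hnn, ← ENNReal.ofReal_mul (by positivity), ← ENNReal.ofReal_one,
      ← ENNReal.ofReal_sub _ (by positivity)]
    congr 1
    rw [hρ, one_div, pow_two, mul_inv]
  -- transfer
  set Θ := (MeasurableEquiv.piCongrLeft (fun _ : (A × Ω) ⊕ (A × Ω) => ℝ)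
      (Equiv.sumProdDistrib A A Ω)).trans
    (MeasurableEquiv.sumPiEquivProdPi (fun _ : (A × Ω) ⊕ (A × Ω) => ℝ)) with hΘ
  have hmpΘ : MeasurePreserving Θ volume volume :=
    (volume_measurePreserving_sumPiEquivProdPi _).comp
      (volume_measurePreserving_piCongrLeft _ _)
  have ev1 : ∀ (f : (A ⊕ A) × Ω → ℝ) (b : A) (ω : Ω),
      (Θ f).1 (b, ω) = f (Sum.inl b, ω) := by
    intro f b ω
    have h := MeasurableEquiv.piCongrLeft_apply_apply (β := fun _ : (A × Ω) ⊕ (A × Ω) => ℝ)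
      (Equiv.sumProdDistrib A A Ω) f (Sum.inl b, ω)
    rw [Equiv.sumProdDistrib_apply_left] at h
    exact h
  have ev2 : ∀ (f : (A ⊕ A) × Ω → ℝ) (b : A) (ω : Ω),
      (Θ f).2 (b, ω) = f (Sum.inr b, ω) := by
    intro f b ω
    have h := MeasurableEquiv.piCongrLeft_apply_apply (β := fun _ : (A × Ω) ⊕ (A × Ω) => ℝ)
      (Equiv.sumProdDistrib A A Ω) f (Sum.inr b, ω)
    rw [Equiv.sumProdDistrib_apply_right] at h
    exact h
  set T : A → Set ((A × Ω → ℝ) × (A × Ω → ℝ)) := fun a =>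
    EnvCube Ω A ∩ {e | ∀ ω : Ω, ¬((∀ b, b ≠ a → e.1 (b, ω) < e.1 (a, ω))
      ∧ (∀ b, b ≠ a → e.2 (b, ω) < e.2 (a, ω)))} with hT
  have hTpre : ∀ a : A, Θ ⁻¹' (T a)
      = {f : (A ⊕ A) × Ω → ℝ | ∀ ω, (fun x => f (x, ω)) ∈ kube (A ⊕ A) \ G a} := by
    intro a
    ext f
    simp only [hT, EnvCube, hG, Set.mem_preimage, Set.mem_inter_iff, Set.mem_setOf_eq,
      Set.mem_diff, kube, Dset, Set.mem_inter_iff, Set.mem_setOf_eq]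
    constructor
    · rintro ⟨⟨hc1, hc2⟩, hfl⟩ ω
      refine ⟨fun x => ?_, fun hmem => ?_⟩
      · cases x with
        | inl b => have := hc1 (b, ω); rwa [ev1] at this
        | inr b => have := hc2 (b, ω); rwa [ev2] at this
      · rcases hmem with ⟨⟨_, hs1⟩, ⟨_, hs2⟩⟩
        refine hfl ω ⟨fun b hb => ?_, fun b hb => ?_⟩
        · rw [ev1, ev1]; exact hs1 b hb
        · rw [ev2, ev2]; exact hs2 b hb
    · intro h
      refine ⟨⟨fun p => ?_, fun p => ?_⟩, fun ω hgood => ?_⟩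
      · rw [show p = (p.1, p.2) from rfl, ev1]; exact (h p.2).1 (Sum.inl p.1)
      · rw [show p = (p.1, p.2) from rfl, ev2]; exact (h p.2).1 (Sum.inr p.1)
      · rcases hgood with ⟨hg1, hg2⟩
        refine (h ω).2 ⟨⟨fun x => (h ω).1 (Sum.inl x), fun b hb => ?_⟩,
          ⟨fun x => (h ω).1 (Sum.inr x), fun b hb => ?_⟩⟩
        · have := hg1 b hb; rwa [ev1, ev1] at this
        · have := hg2 b hb; rwa [ev2, ev2] at this
  have hTvol : ∀ a : A, volume (T a) ≤ ENNReal.ofReal ρ ^ k := by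
    intro a
    have hRm : MeasurableSet
        {f : (A ⊕ A) × Ω → ℝ | ∀ ω, (fun x => f (x, ω)) ∈ kube (A ⊕ A) \ G a} := by
      have h : {f : (A ⊕ A) × Ω → ℝ | ∀ ω, (fun x => f (x, ω)) ∈ kube (A ⊕ A) \ G a}
          = ⋂ ω : Ω, (fun (f : (A ⊕ A) × Ω → ℝ) (x : A ⊕ A) => f (x, ω)) ⁻¹'
              (kube (A ⊕ A) \ G a) := by
        ext f; simp
      rw [h]
      exact MeasurableSet.iInter fun ω =>
        (measurable_pi_lambda _ fun x => measurable_pi_apply _)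
          (measurableSet_kube.diff (hGm a))
    have hTeq : T a = Θ.symm ⁻¹'
        {f : (A ⊕ A) × Ω → ℝ | ∀ ω, (fun x => f (x, ω)) ∈ kube (A ⊕ A) \ G a} := by
      rw [← hTpre a]
      ext x
      simp
    rw [hTeq, (hmpΘ.symm Θ).measure_preimage hRm.nullMeasurableSet,
      vol_slices _ (measurableSet_kube.diff (hGm a))]
    exact pow_le_pow_left' (hfail a) k
  have hcover : EnvCube Ω A ⊆ (EnvCube Ω A ∩ {e | JointlyInclusive e.1 e.2}) ∪ ⋃ a : A, T a := by
    intro e he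
    by_cases hJI : JointlyInclusive e.1 e.2
    · exact Or.inl ⟨he, hJI⟩
    · rcases not_forall.mp hJI with ⟨a, ha⟩
      exact Or.inr (Set.mem_iUnion.2 ⟨a, he, fun ω hpq => ha ⟨ω, hpq⟩⟩)
  have hsum : volume (⋃ a : A, T a) ≤ ENNReal.ofReal ((n:ℝ) * ρ ^ k) := by
    calc volume (⋃ a : A, T a) ≤ ∑' a : A, volume (T a) := measure_iUnion_le _
      _ ≤ ∑' _a : A, ENNReal.ofReal ρ ^ k := ENNReal.tsum_le_tsum hTvol
      _ = ∑ _a : A, ENNReal.ofReal ρ ^ k := tsum_fintype _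
      _ = (n : ℝ≥0∞) * ENNReal.ofReal ρ ^ k := by
          rw [Finset.sum_const, Finset.card_univ, nsmul_eq_mul, hn]
      _ = ENNReal.ofReal ((n:ℝ) * ρ ^ k) := by
          rw [ENNReal.ofReal_mul (by positivity), ENNReal.ofReal_pow hρ0,
            ENNReal.ofReal_natCast]
  have hmain : (1:ℝ≥0∞) ≤ volume (EnvCube Ω A ∩ {e | JointlyInclusive e.1 e.2})
      + ENNReal.ofReal ((n:ℝ) * ρ ^ k) := by
    calc (1:ℝ≥0∞) = volume (EnvCube Ω A) := (vol_env Ω A).symm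
      _ ≤ volume ((EnvCube Ω A ∩ {e | JointlyInclusive e.1 e.2}) ∪ ⋃ a : A, T a) :=
          measure_mono hcover
      _ ≤ volume (EnvCube Ω A ∩ {e | JointlyInclusive e.1 e.2}) + volume (⋃ a : A, T a) :=
          measure_union_le _ _
      _ ≤ _ := add_le_add_right hsum _
  have hVle : volume (EnvCube Ω A ∩ {e | JointlyInclusive e.1 e.2}) ≤ 1 := by
    calc volume (EnvCube Ω A ∩ {e | JointlyInclusive e.1 e.2})
        ≤ volume (EnvCube Ω A) := measure_mono Set.inter_subset_left
      _ = 1 := vol_env Ω A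
  have hVne : volume (EnvCube Ω A ∩ {e | JointlyInclusive e.1 e.2}) ≠ ⊤ :=
    (lt_of_le_of_lt hVle ENNReal.one_lt_top).ne
  have hofReal : ENNReal.ofReal (1 - (n:ℝ) * ρ ^ k)
      ≤ volume (EnvCube Ω A ∩ {e | JointlyInclusive e.1 e.2}) := by
    rw [ENNReal.ofReal_sub _ (mul_nonneg (by positivity) (pow_nonneg hρ0 k)),
      ENNReal.ofReal_one]
    exact tsub_le_iff_right.mpr hmain
  exact (ENNReal.ofReal_le_iff_le_toReal hVne).mp hofReal


/-- Lemma (Kamenica–Lin): the share of jointly-inclusive environments is at least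
`1 − |A|(1 − 1/|A|²)^{|Ω|}`; consequently, it converges to 1 as `|Ω| → ∞`. -/
theorem share_jointly_inclusive
    (A : Type) [Fintype A] [Nonempty A] :
    (∀ (Ω : Type) [Fintype Ω] [Nonempty Ω],
      1 - (Fintype.card A : ℝ) *
          (1 - 1 / (Fintype.card A : ℝ) ^ 2) ^ Fintype.card Ω ≤
        (volume (EnvCube Ω A ∩ {e | JointlyInclusive e.1 e.2})).toReal) ∧
    ∀ ε : ℝ, 0 < ε → ∃ N : ℕ,
      ∀ (Ω : Type) [Fintype Ω] [Nonempty Ω], N ≤ Fintype.card Ω →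
        |(volume (EnvCube Ω A ∩ {e | JointlyInclusive e.1 e.2})).toReal - 1| ≤ ε := by
  constructor
  · intro W _ _
    exact main_bound A W
  · intro ε hε
    have hn1 : (1:ℕ) ≤ Fintype.card A := Fintype.card_pos
    have hn1R : (1:ℝ) ≤ (Fintype.card A : ℝ) := by exact_mod_cast hn1
    have hr0 : (0:ℝ) ≤ 1 - 1 / (Fintype.card A : ℝ) ^ 2 := by
      have h2 : (1:ℝ) ≤ (Fintype.card A : ℝ)^2 := by nlinarith
      have h3 : 1 / (Fintype.card A : ℝ)^2 ≤ 1 := by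
        rw [div_le_one (by nlinarith)]; exact h2
      linarith
    have hr1 : 1 - 1 / (Fintype.card A : ℝ) ^ 2 < 1 := by
      have : 0 < 1 / (Fintype.card A : ℝ)^2 := by positivity
      linarith
    obtain ⟨N, hN⟩ := exists_pow_lt_of_lt_one
      (div_pos hε (by linarith : (0:ℝ) < (Fintype.card A : ℝ))) hr1
    refine ⟨N, fun W _ _ hcard => ?_⟩
    have hb := main_bound A W
    have hVle : volume (EnvCube W A ∩ {e | JointlyInclusive e.1 e.2}) ≤ 1 := by
      calc volume (EnvCube W A ∩ {e | JointlyInclusive e.1 e.2})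
          ≤ volume (EnvCube W A) := measure_mono Set.inter_subset_left
        _ = 1 := vol_env W A
    have hV1 : (volume (EnvCube W A ∩ {e | JointlyInclusive e.1 e.2})).toReal ≤ 1 := by
      have := ENNReal.toReal_mono ENNReal.one_ne_top hVle
      simpa using this
    have h2 : (Fintype.card A : ℝ) * (1 - 1 / (Fintype.card A : ℝ) ^ 2) ^ Fintype.card W
        ≤ (Fintype.card A : ℝ) * (1 - 1 / (Fintype.card A : ℝ) ^ 2) ^ N :=
      mul_le_mul_of_nonneg_left (pow_le_pow_of_le_one hr0 hr1.le hcard) (by linarith)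
    have h3 : (Fintype.card A : ℝ) * (1 - 1 / (Fintype.card A : ℝ) ^ 2) ^ N ≤ ε := by
      calc (Fintype.card A : ℝ) * (1 - 1 / (Fintype.card A : ℝ) ^ 2) ^ N
          ≤ (Fintype.card A : ℝ) * (ε / (Fintype.card A : ℝ)) :=
            mul_le_mul_of_nonneg_left hN.le (by linarith)
        _ = ε := by field_simp
    rw [abs_sub_comm, abs_of_nonneg (by linarith)]
    linarith

end ShareProof


end KL
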